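/- An aggregate ranking obtained by minimizing the cumulative weighted Kendall distance with a decreasing weight function that is not identically zero satisfies the majority criterion: any candidate ranked first by a strict majority of the voters is ranked first in every optimal aggregate. -/

import Mathlib

open Equiv Finset

/-- The adjacent transposition swapping positions `i` and `i+1` (0-indexed);
identity if out of range. -/
def adjSwap (n i : ℕ) : Equiv.Perm (Fin n) :=
  if h : i + 1 < n then Equiv.swap ⟨i, Nat.lt_of_succ_lt h⟩ ⟨i + 1, h⟩ else 1

/-- `ω` is between `π` and `σ`: on every pair `{a,b}`, `ω` agrees with `π` or with `σ`. -/
def Between {n : ℕ} (π ω σ : Equiv.Perm (Fin n)) : Prop :=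
  ∀ a b : Fin n, (π⁻¹ a < π⁻¹ b ↔ ω⁻¹ a < ω⁻¹ b) ∨ (σ⁻¹ a < σ⁻¹ b ↔ ω⁻¹ a < ω⁻¹ b)

/-- Kendall tau distance: minimum number of adjacent transpositions transforming `π` into `σ`. -/
noncomputable def kendall {n : ℕ} (π σ : Equiv.Perm (Fin n)) : ℕ :=
  sInf {s | ∃ l : List ℕ, (∀ i ∈ l, i + 1 < n) ∧
    σ = π * (l.map (adjSwap n)).prod ∧ l.length = s}

/-- The set of inversions between `π` and `σ` (each unordered pair `{i,j}` of disagreement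
is recorded as the ordered pair `(i,j)` with `i` ranked before `j` by `π`). -/
def invSet {n : ℕ} (π σ : Equiv.Perm (Fin n)) : Finset (Fin n × Fin n) :=
  Finset.univ.filter fun p => π⁻¹ p.1 < π⁻¹ p.2 ∧ σ⁻¹ p.2 < σ⁻¹ p.1

/-- Elements `j` on whose relative order with `i` the permutations `π` and `σ` disagree. -/
def invWith {n : ℕ} (π σ : Equiv.Perm (Fin n)) (i : Fin n) : Finset (Fin n) :=
  Finset.univ.filter fun j => ¬(π⁻¹ i < π⁻¹ j ↔ σ⁻¹ i < σ⁻¹ j)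

/-- Weighted Kendall distance for weight function `φ` on adjacent transpositions
(`φ h` is the weight of swapping positions `h, h+1`, 0-indexed). -/
noncomputable def wKendall {n : ℕ} (φ : ℕ → ℝ) (π σ : Equiv.Perm (Fin n)) : ℝ :=
  sInf {w | ∃ l : List ℕ, (∀ i ∈ l, i + 1 < n) ∧
    σ = π * (l.map (adjSwap n)).prod ∧ (l.map φ).sum = w}

/-- `w(k:l)`: sum of adjacent-transposition weights between positions `min k l` and `max k l - 1`. -/
def wsum (φ : ℕ → ℝ) (k l : ℕ) : ℝ := ∑ h ∈ Finset.Ico (min k l) (max k l), φ h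

/-- The generalized (weighted) Spearman footrule `D_φ`. -/
noncomputable def DKendall {n : ℕ} (φ : ℕ → ℝ) (π σ : Equiv.Perm (Fin n)) : ℝ :=
  ∑ i : Fin n, wsum φ ((π⁻¹ i : Fin n) : ℕ) ((σ⁻¹ i : Fin n) : ℕ)

/-- Weighted transposition distance with weight function `φ` on transpositions. -/
noncomputable def wTrans {n : ℕ} (φ : Fin n → Fin n → ℝ) (π σ : Equiv.Perm (Fin n)) : ℝ :=
  sInf {w | ∃ l : List (Fin n × Fin n), (∀ p ∈ l, p.1 ≠ p.2) ∧
    σ = π * (l.map fun p => Equiv.swap p.1 p.2).prod ∧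
    (l.map fun p => φ p.1 p.2).sum = w}

/-- Weight of a path (as a list of vertices) in the complete graph `K_φ`. -/
def pathWt {n : ℕ} (φ : Fin n → Fin n → ℝ) (p : List (Fin n)) : ℝ :=
  ((p.zip p.tail).map fun q => φ q.1 q.2).sum

/-- `p` is a path from `a` to `b` (consecutive vertices distinct). -/
def IsPath {n : ℕ} (p : List (Fin n)) (a b : Fin n) : Prop :=
  p.head? = some a ∧ p.getLast? = some b ∧ p.Chain' (· ≠ ·)

/-- Minimum weight of a path from `a` to `b` in `K_φ`. -/
noncomputable def minPathWt {n : ℕ} (φ : Fin n → Fin n → ℝ) (a b : Fin n) : ℝ :=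
  sInf {w | ∃ p : List (Fin n), IsPath p a b ∧ pathWt φ p = w}

/-- The footrule-type lower/upper bounding function `D_φ` for transposition weights. -/
noncomputable def DTrans {n : ℕ} (φ : Fin n → Fin n → ℝ) (π σ : Equiv.Perm (Fin n)) : ℝ :=
  ∑ i : Fin n, minPathWt φ (π⁻¹ i) (σ⁻¹ i)

namespace Stmt10Aux
def pAdj (n : ℕ) (l : List ℕ) : Equiv.Perm (Fin n) := (l.map (adjSwap n)).prod
lemma adjSwap_eq {n i : ℕ} (h : i + 1 < n) :
    adjSwap n i = Equiv.swap ⟨i, Nat.lt_of_succ_lt h⟩ ⟨i + 1, h⟩ := dif_pos h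
lemma adjSwap_eq_one {n i : ℕ} (h : ¬ i + 1 < n) : adjSwap n i = 1 := dif_neg h
lemma adjSwap_inv (n i : ℕ) : (adjSwap n i)⁻¹ = adjSwap n i := by
  unfold adjSwap; split_ifs
  · exact Equiv.swap_inv _ _
  · exact inv_one
@[simp] lemma pAdj_nil (n : ℕ) : pAdj n [] = 1 := rfl
@[simp] lemma pAdj_cons (n i : ℕ) (l : List ℕ) :
    pAdj n (i :: l) = adjSwap n i * pAdj n l := by simp [pAdj]
lemma pAdj_append (n : ℕ) (l₁ l₂ : List ℕ) :
    pAdj n (l₁ ++ l₂) = pAdj n l₁ * pAdj n l₂ := by simp [pAdj]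
lemma pAdj_reverse (n : ℕ) (l : List ℕ) : pAdj n l.reverse = (pAdj n l)⁻¹ := by
  induction l with
  | nil => simp
  | cons i l ih =>
    rw [List.reverse_cons, pAdj_append, pAdj_cons, ih]
    simp [adjSwap_inv]

-- NEW PART
lemma exists_word {n : ℕ} (g : Equiv.Perm (Fin n)) :
    ∃ l : List ℕ, (∀ i ∈ l, i + 1 < n) ∧ pAdj n l = g := by
  cases n with
  | zero =>
    refine ⟨[], by simp, ?_⟩
    simp [pAdj]
    exact Subsingleton.elim _ _
  | succ k =>
    have hg : g ∈ Submonoid.closure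
        (Set.range fun i : Fin k => Equiv.swap i.castSucc i.succ) := by
      rw [Equiv.Perm.mclosure_swap_castSucc_succ k]; trivial
    obtain ⟨L, hL, hprod⟩ := Submonoid.exists_list_of_mem_closure hg
    clear hg
    subst hprod
    induction L with
    | nil => exact ⟨[], by simp, rfl⟩
    | cons y L ih =>
      obtain ⟨l, hl, hpl⟩ := ih (fun z hz => hL z (List.mem_cons_of_mem _ hz))
      obtain ⟨i, hi⟩ := hL y List.mem_cons_self
      refine ⟨(i : ℕ) :: l, ?_, ?_⟩
      · intro j hj
        rcases List.mem_cons.1 hj with rfl | hj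
        · omega
        · exact hl j hj
      · rw [pAdj_cons, hpl, List.prod_cons, ← hi]
        congr 1
        rw [adjSwap_eq (by omega : (i : ℕ) + 1 < k + 1)]
        congr 1 <;> apply Fin.ext <;> simp

lemma commute_adjSwap {n : ℕ} (i j : ℕ) (hij : i + 2 ≤ j) :
    Commute (adjSwap n i) (adjSwap n j) := by
  by_cases hi : i + 1 < n
  · by_cases hj : j + 1 < n
    · rw [adjSwap_eq hi, adjSwap_eq hj]
      apply Equiv.Perm.Disjoint.commute
      intro x
      by_cases hx : (x : ℕ) = i ∨ (x : ℕ) = i + 1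
      · right
        apply Equiv.swap_apply_of_ne_of_ne <;>
          · intro hc; rw [Fin.ext_iff] at hc; simp at hc; omega
      · left
        apply Equiv.swap_apply_of_ne_of_ne <;>
          · intro hc; rw [Fin.ext_iff] at hc; simp at hc; omega
    · rw [adjSwap_eq_one hj]; exact Commute.one_right _
  · rw [adjSwap_eq_one hi]; exact Commute.one_left _

/-- `Dp n p` : product moving position `p` down to `0` (i.e. `s_{p-1} ⋯ s_1 s_0`). -/
def Dp (n p : ℕ) : Equiv.Perm (Fin n) := pAdj n ((List.range p).reverse)

@[simp] lemma Dp_zero (n : ℕ) : Dp n 0 = 1 := rfl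

lemma Dp_succ (n p : ℕ) : Dp n (p + 1) = adjSwap n p * Dp n p := by
  unfold Dp
  rw [List.range_succ, List.reverse_append]
  simp [pAdj]

lemma Dp_eq (n p : ℕ) : Dp n p = (pAdj n (List.range p))⁻¹ := pAdj_reverse n _

lemma adjSwap_Dp_comm_high {n : ℕ} (q p : ℕ) (h : p + 1 ≤ q) :
    adjSwap n q * Dp n p = Dp n p * adjSwap n q := by
  induction p with
  | zero => simp
  | succ p ih =>
    rw [Dp_succ, ← mul_assoc, ← (commute_adjSwap p q (by omega)).eq, mul_assoc,
      ih (by omega), mul_assoc]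

lemma braid {n h : ℕ} (hn : h + 2 < n) :
    adjSwap n h * adjSwap n (h + 1) * adjSwap n h =
      adjSwap n (h + 1) * adjSwap n h * adjSwap n (h + 1) := by
  have h1 : h + 1 < n := by omega
  have h2 : h + 1 + 1 < n := by omega
  rw [adjSwap_eq h1, adjSwap_eq h2]
  have e1 := Equiv.swap_apply_apply (Equiv.swap (⟨h, by omega⟩ : Fin n) ⟨h + 1, h1⟩)
    (⟨h + 1, h1⟩ : Fin n) ⟨h + 2, hn⟩
  have e2 := Equiv.swap_apply_apply (Equiv.swap (⟨h + 1, h1⟩ : Fin n) ⟨h + 2, hn⟩)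
    (⟨h, by omega⟩ : Fin n) ⟨h + 1, h1⟩
  rw [Equiv.swap_inv] at e1 e2
  rw [Equiv.swap_apply_of_ne_of_ne (by simp [Fin.ext_iff]; try omega) (by simp [Fin.ext_iff]; try omega),
    Equiv.swap_apply_left] at e2
  have e3 : Equiv.swap ((Equiv.swap (⟨h, by omega⟩ : Fin n) ⟨h+1, h1⟩) ⟨h+1, h1⟩)
      ((Equiv.swap (⟨h, by omega⟩ : Fin n) ⟨h+1, h1⟩) ⟨h+2, hn⟩) =
      Equiv.swap (⟨h, by omega⟩ : Fin n) ⟨h+2, hn⟩ := by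
    rw [Equiv.swap_apply_right,
      Equiv.swap_apply_of_ne_of_ne (by simp [Fin.ext_iff]; try omega) (by simp [Fin.ext_iff]; try omega)]
  rw [e3] at e1
  exact e1.symm.trans e2

lemma adjSwap_sq {n : ℕ} (i : ℕ) : adjSwap n i * adjSwap n i = 1 := by
  unfold adjSwap; split_ifs
  · exact Equiv.swap_mul_self _ _
  · exact one_mul 1

lemma adjSwap_Dp {n : ℕ} (h p : ℕ) (h2 : h + 2 ≤ p) (hp : p < n) :
    adjSwap n h * Dp n p = Dp n p * adjSwap n (h + 1) := by
  induction p with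
  | zero => omega
  | succ p ih =>
    rcases Nat.lt_or_ge (h + 2) (p + 1) with hlt | hge
    · -- h + 2 ≤ p
      rw [Dp_succ, ← mul_assoc, (commute_adjSwap h p (by omega)).eq, mul_assoc,
        ih (by omega) (by omega), ← mul_assoc]
    · -- p = h + 1
      have hps : p = h + 1 := by omega
      subst hps
      rw [Dp_succ, Dp_succ]
      calc adjSwap n h * (adjSwap n (h + 1) * (adjSwap n h * Dp n h))
          = adjSwap n h * adjSwap n (h + 1) * adjSwap n h * Dp n h := by
            simp only [mul_assoc]
        _ = adjSwap n (h + 1) * adjSwap n h * adjSwap n (h + 1) * Dp n h := by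
            rw [braid (by omega)]
        _ = adjSwap n (h + 1) * adjSwap n h * (adjSwap n (h + 1) * Dp n h) := by
            simp only [mul_assoc]
        _ = adjSwap n (h + 1) * adjSwap n h * (Dp n h * adjSwap n (h + 1)) := by
            rw [adjSwap_Dp_comm_high (h + 1) h (by omega)]
        _ = adjSwap n (h + 1) * (adjSwap n h * Dp n h) * adjSwap n (h + 1) := by
            simp only [mul_assoc]

lemma inv_mul_adj {n : ℕ} (τ : Equiv.Perm (Fin n)) (h : ℕ) (a : Fin n) :
    (τ * adjSwap n h)⁻¹ a = adjSwap n h (τ⁻¹ a) := by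
  rw [mul_inv_rev, adjSwap_inv, Equiv.Perm.mul_apply]

lemma adjSwap_val {n h : ℕ} (hn : h + 1 < n) (x : Fin n) :
    ((adjSwap n h x : Fin n) : ℕ) =
      if (x : ℕ) = h then h + 1 else if (x : ℕ) = h + 1 then h else (x : ℕ) := by
  rw [adjSwap_eq hn, Equiv.swap_apply_def]
  rcases eq_or_ne (x : ℕ) h with hx | hx
  · rw [if_pos (Fin.ext hx), if_pos hx]
  · rw [if_neg (fun hc => hx (by rw [hc])), if_neg hx]
    rcases eq_or_ne (x : ℕ) (h + 1) with hy | hy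
    · rw [if_pos (Fin.ext hy), if_pos hy]
    · rw [if_neg (fun hc => hy (by rw [hc])), if_neg hy]

lemma key {n : ℕ} (φ : ℕ → ℝ) (hφ0 : ∀ i, i + 1 < n → 0 ≤ φ i)
    (hdec : ∀ i j, j ≤ i → i + 1 < n → φ i ≤ φ j)
    (a : Fin n) (σ : Equiv.Perm (Fin n)) (hσ : ((σ⁻¹ a : Fin n) : ℕ) = 0) :
    ∀ l : List ℕ, ∀ τ : Equiv.Perm (Fin n), (∀ i ∈ l, i + 1 < n) → σ = τ * pAdj n l →
    ∃ l' : List ℕ, (∀ i ∈ l', i + 1 < n) ∧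
      σ = (τ * Dp n ((τ⁻¹ a : Fin n) : ℕ)) * pAdj n l' ∧
      (l'.map φ).sum + ∑ j ∈ Finset.range ((τ⁻¹ a : Fin n) : ℕ), φ j ≤ (l.map φ).sum := by
  intro l
  induction l with
  | nil =>
    intro τ hv heq
    have hτ : τ = σ := by rw [heq, pAdj_nil, mul_one]
    subst hτ
    refine ⟨[], by simp, ?_, ?_⟩
    · rw [hσ, Dp_zero, mul_one, pAdj_nil, mul_one]
    · rw [hσ]; simp
  | cons h rest ih =>
    intro τ hv heq
    have hn : h + 1 < n := hv h List.mem_cons_self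
    have heq' : σ = (τ * adjSwap n h) * pAdj n rest := by
      rw [heq, pAdj_cons, mul_assoc]
    obtain ⟨l'', hv'', heq'', hsum''⟩ :=
      ih (τ * adjSwap n h) (fun i hi => hv i (List.mem_cons_of_mem _ hi)) heq'
    have hp' : (((τ * adjSwap n h)⁻¹ a : Fin n) : ℕ) =
        if ((τ⁻¹ a : Fin n) : ℕ) = h then h + 1
        else if ((τ⁻¹ a : Fin n) : ℕ) = h + 1 then h else ((τ⁻¹ a : Fin n) : ℕ) := by
      rw [inv_mul_adj, adjSwap_val hn]
    set p := ((τ⁻¹ a : Fin n) : ℕ) with hpdef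
    have hplt : p < n := (τ⁻¹ a).isLt
    have hφh : 0 ≤ φ h := hφ0 h hn
    rcases eq_or_ne p h with h1 | h1
    · -- p = h : a moves up, p' = h+1
      rw [hp', if_pos h1] at heq'' hsum''
      refine ⟨l'', hv'', ?_, ?_⟩
      · rw [heq'', ← h1, Dp_succ]
        have e : τ * adjSwap n p * (adjSwap n p * Dp n p) = τ * Dp n p := by
          rw [mul_assoc, ← mul_assoc (adjSwap n p), adjSwap_sq, one_mul]
        rw [e]
      · rw [Finset.sum_range_succ, ← h1] at hsum''
        simp only [List.map_cons, List.sum_cons]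
        have := hφ0 p (by rw [h1]; exact hn)
        rw [h1] at hsum'' ⊢
        linarith
    · rcases eq_or_ne p (h + 1) with h2 | h2
      · -- p = h + 1 : a moves down, p' = h
        rw [hp', if_neg h1, if_pos h2] at heq'' hsum''
        refine ⟨l'', hv'', ?_, ?_⟩
        · rw [heq'', h2, Dp_succ, ← mul_assoc]
        · rw [h2, Finset.sum_range_succ]
          simp only [List.map_cons, List.sum_cons]
          linarith
      · rcases Nat.lt_or_ge p h with h3 | h3
        · -- p < h : a untouched, commute
          rw [hp', if_neg h1, if_neg h2] at heq'' hsum''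
          refine ⟨h :: l'', ?_, ?_, ?_⟩
          · intro i hi
            rcases List.mem_cons.1 hi with rfl | hi
            · exact hn
            · exact hv'' i hi
          · rw [heq'', pAdj_cons, mul_assoc τ (adjSwap n h) (Dp n p),
              adjSwap_Dp_comm_high h p (by omega), ← mul_assoc τ (Dp n p) (adjSwap n h),
              mul_assoc (τ * Dp n p) (adjSwap n h) (pAdj n l'')]
          · simp only [List.map_cons, List.sum_cons]
            linarith
        · -- h + 2 ≤ p
          have h4 : h + 2 ≤ p := by omega
          rw [hp', if_neg h1, if_neg h2] at heq'' hsum''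
          refine ⟨(h + 1) :: l'', ?_, ?_, ?_⟩
          · intro i hi
            rcases List.mem_cons.1 hi with rfl | hi
            · omega
            · exact hv'' i hi
          · rw [heq'', pAdj_cons, mul_assoc τ (adjSwap n h) (Dp n p),
              adjSwap_Dp h p h4 hplt, ← mul_assoc τ (Dp n p) (adjSwap n (h + 1)),
              mul_assoc (τ * Dp n p) (adjSwap n (h + 1)) (pAdj n l'')]
          · simp only [List.map_cons, List.sum_cons]
            have : φ (h + 1) ≤ φ h := hdec (h + 1) h (by omega) (by omega)
            linarith

end Stmt10Aux


namespace Stmt10Aux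

lemma wkSet_nonempty {n : ℕ} (φ : ℕ → ℝ) (π σ : Equiv.Perm (Fin n)) :
    {w | ∃ l : List ℕ, (∀ i ∈ l, i + 1 < n) ∧
      σ = π * (l.map (adjSwap n)).prod ∧ (l.map φ).sum = w}.Nonempty := by
  obtain ⟨l, hv, hp⟩ := exists_word (π⁻¹ * σ)
  exact ⟨(l.map φ).sum, l, hv, by rw [show (l.map (adjSwap n)).prod = pAdj n l from rfl, hp,
    ← mul_assoc, mul_inv_cancel, one_mul], rfl⟩

lemma wkSet_bdd {n : ℕ} (φ : ℕ → ℝ) (hφ0 : ∀ i, i + 1 < n → 0 ≤ φ i)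
    (π σ : Equiv.Perm (Fin n)) :
    BddBelow {w | ∃ l : List ℕ, (∀ i ∈ l, i + 1 < n) ∧
      σ = π * (l.map (adjSwap n)).prod ∧ (l.map φ).sum = w} := by
  refine ⟨0, ?_⟩
  rintro w ⟨l, hv, -, rfl⟩
  apply List.sum_nonneg
  intro x hx
  obtain ⟨i, hi, rfl⟩ := List.mem_map.1 hx
  exact hφ0 i (hv i hi)

lemma wK_le {n : ℕ} (φ : ℕ → ℝ) (hφ0 : ∀ i, i + 1 < n → 0 ≤ φ i)
    (π σ : Equiv.Perm (Fin n)) (l : List ℕ) (hv : ∀ i ∈ l, i + 1 < n)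
    (heq : σ = π * pAdj n l) : wKendall φ π σ ≤ (l.map φ).sum :=
  csInf_le (wkSet_bdd φ hφ0 π σ) ⟨l, hv, heq, rfl⟩

lemma le_wK {n : ℕ} (φ : ℕ → ℝ) (π σ : Equiv.Perm (Fin n)) (b : ℝ)
    (h : ∀ l : List ℕ, (∀ i ∈ l, i + 1 < n) → σ = π * pAdj n l → b ≤ (l.map φ).sum) :
    b ≤ wKendall φ π σ := by
  apply le_csInf (wkSet_nonempty φ π σ)
  rintro w ⟨l, hv, heq, rfl⟩
  exact h l hv heq

lemma sum_range_list (φ : ℕ → ℝ) (k : ℕ) :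
    ((List.range k).map φ).sum = ∑ j ∈ Finset.range k, φ j := by
  induction k with
  | zero => simp
  | succ k ih => rw [List.range_succ, Finset.sum_range_succ, List.map_append, List.sum_append, ih]; simp

lemma upper {n : ℕ} (φ : ℕ → ℝ) (hφ0 : ∀ i, i + 1 < n → 0 ≤ φ i)
    (π σ : Equiv.Perm (Fin n)) (k : ℕ) (hk : k < n) :
    wKendall φ (π * Dp n k) σ ≤ wKendall φ π σ + ∑ j ∈ Finset.range k, φ j := by
  have h1 : wKendall φ (π * Dp n k) σ - ∑ j ∈ Finset.range k, φ j ≤ wKendall φ π σ := by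
    apply le_wK
    intro l hv heq
    have hword : σ = (π * Dp n k) * pAdj n (List.range k ++ l) := by
      rw [pAdj_append, ← mul_assoc, mul_assoc π (Dp n k), Dp_eq, inv_mul_cancel, mul_one, heq]
    have hvv : ∀ i ∈ List.range k ++ l, i + 1 < n := by
      intro i hi
      rcases List.mem_append.1 hi with hi | hi
      · have := List.mem_range.1 hi; omega
      · exact hv i hi
    have := wK_le φ hφ0 _ σ _ hvv hword
    rw [List.map_append, List.sum_append, sum_range_list] at this
    linarith
  linarith

lemma lower {n : ℕ} (φ : ℕ → ℝ) (hφ0 : ∀ i, i + 1 < n → 0 ≤ φ i)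
    (hdec : ∀ i j, j ≤ i → i + 1 < n → φ i ≤ φ j)
    (a : Fin n) (π σ : Equiv.Perm (Fin n)) (hσ : ((σ⁻¹ a : Fin n) : ℕ) = 0) :
    wKendall φ (π * Dp n ((π⁻¹ a : Fin n) : ℕ)) σ + ∑ j ∈ Finset.range ((π⁻¹ a : Fin n) : ℕ), φ j
      ≤ wKendall φ π σ := by
  apply le_wK
  intro l hv heq
  obtain ⟨l', hv', heq', hsum'⟩ := key φ hφ0 hdec a σ hσ l π hv heq
  have := wK_le φ hφ0 _ σ _ hv' heq'
  linarith

end Stmt10Aux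

theorem stmt10 (n m : ℕ) (φ : ℕ → ℝ)
    (hφ0 : ∀ i, i + 1 < n → 0 ≤ φ i)
    (hdec : ∀ i j, j ≤ i → i + 1 < n → φ i ≤ φ j)
    (hne : ∃ i, i + 1 < n ∧ 0 < φ i)
    (σ : Fin m → Equiv.Perm (Fin n)) (a : Fin n)
    (hmaj : m < 2 * (Finset.univ.filter fun j : Fin m => (((σ j)⁻¹ a : Fin n) : ℕ) = 0).card)
    (π : Equiv.Perm (Fin n))
    (hopt : ∀ ρ : Equiv.Perm (Fin n),
      ∑ j : Fin m, wKendall φ π (σ j) ≤ ∑ j : Fin m, wKendall φ ρ (σ j)) :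
    ((π⁻¹ a : Fin n) : ℕ) = 0 := by
  by_contra hka
  have hkn : ((π⁻¹ a : Fin n) : ℕ) < n := (π⁻¹ a).isLt
  have hkpos : 0 < ((π⁻¹ a : Fin n) : ℕ) := Nat.pos_of_ne_zero hka
  set k := ((π⁻¹ a : Fin n) : ℕ) with hk
  set W := ∑ j ∈ Finset.range k, φ j with hW
  obtain ⟨i0, hi0, hpos0⟩ := hne
  have hφ0pos : 0 < φ 0 := lt_of_lt_of_le hpos0 (hdec i0 0 (Nat.zero_le _) hi0)
  have hWpos : 0 < W := by
    refine lt_of_lt_of_le hφ0pos ?_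
    apply Finset.single_le_sum (f := φ)
    · intro j hj
      have := Finset.mem_range.1 hj
      exact hφ0 j (by omega)
    · exact Finset.mem_range.mpr hkpos
  set ρ := π * Stmt10Aux.Dp n k with hρ
  set P : Fin m → Prop := fun j => (((σ j)⁻¹ a : Fin n) : ℕ) = 0 with hP
  have hub : ∀ j : Fin m, wKendall φ ρ (σ j) ≤ wKendall φ π (σ j) + W :=
    fun j => Stmt10Aux.upper φ hφ0 π (σ j) k hkn
  have hlb : ∀ j : Fin m, P j → wKendall φ ρ (σ j) + W ≤ wKendall φ π (σ j) :=
    fun j hj => Stmt10Aux.lower φ hφ0 hdec a π (σ j) hj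
  classical
  have hcard : (Finset.univ.filter P).card + (Finset.univ.filter fun j => ¬ P j).card = m := by
    rw [Finset.card_filter_add_card_filter_not, Finset.card_univ, Fintype.card_fin]
  set c := (Finset.univ.filter P).card with hc
  set c' := (Finset.univ.filter fun j => ¬ P j).card with hc'
  have hcc : c' < c := by
    have : m < 2 * c := hmaj
    omega
  have hsum1 : ∑ j ∈ Finset.univ.filter P, wKendall φ ρ (σ j)
      ≤ ∑ j ∈ Finset.univ.filter P, wKendall φ π (σ j) - c * W := by
    have h1 : ∑ j ∈ Finset.univ.filter P, wKendall φ ρ (σ j)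
        ≤ ∑ j ∈ Finset.univ.filter P, (wKendall φ π (σ j) - W) := by
      apply Finset.sum_le_sum
      intro j hj
      have := hlb j ((Finset.mem_filter.1 hj).2)
      linarith
    rw [Finset.sum_sub_distrib, Finset.sum_const, nsmul_eq_mul] at h1
    exact h1
  have hsum2 : ∑ j ∈ Finset.univ.filter (fun j => ¬ P j), wKendall φ ρ (σ j)
      ≤ ∑ j ∈ Finset.univ.filter (fun j => ¬ P j), wKendall φ π (σ j) + c' * W := by
    have h1 : ∑ j ∈ Finset.univ.filter (fun j => ¬ P j), wKendall φ ρ (σ j)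
        ≤ ∑ j ∈ Finset.univ.filter (fun j => ¬ P j), (wKendall φ π (σ j) + W) := by
      apply Finset.sum_le_sum
      intro j _
      exact hub j
    rw [Finset.sum_add_distrib, Finset.sum_const, nsmul_eq_mul] at h1
    exact h1
  have hsplit1 : ∑ j ∈ Finset.univ.filter P, wKendall φ ρ (σ j)
      + ∑ j ∈ Finset.univ.filter (fun j => ¬ P j), wKendall φ ρ (σ j)
      = ∑ j : Fin m, wKendall φ ρ (σ j) :=
    Finset.sum_filter_add_sum_filter_not Finset.univ P _
  have hsplit2 : ∑ j ∈ Finset.univ.filter P, wKendall φ π (σ j)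
      + ∑ j ∈ Finset.univ.filter (fun j => ¬ P j), wKendall φ π (σ j)
      = ∑ j : Fin m, wKendall φ π (σ j) :=
    Finset.sum_filter_add_sum_filter_not Finset.univ P _
  have hprod : (c' : ℝ) * W < (c : ℝ) * W := by
    apply mul_lt_mul_of_pos_right _ hWpos
    exact_mod_cast hcc
  have hopt' := hopt ρ
  linarith
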